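/- arXiv:2005.01083 — 3 statements merged into one kernel-verified Lean document; each statement's English description precedes it below -/
import Mathlib

section
/- Let Φ be a strictly incoherent operation (SIO) on a single qutrit. Fix i ∈ {1, …, 6} and j ∈ {7, 8}, and let ρ be a qutrit density matrix whose Bloch vector t = (t₁, …, t₈) satisfies t_k = 0 for all k ∉ {i, j}. Let m = (m₁, …, m₈) be the Bloch vector of Φ(ρ). Then m_i² ≤ t_i². -/
open Matrix ComplexOrder

/-- A matrix is an incoherent Kraus operator if each column contains at most
one nonzero entry. -/
def IsIncoherentKraus (K : Matrix (Fin 3) (Fin 3) ℂ) : Prop :=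
  ∀ j i₁ i₂, K i₁ j ≠ 0 → K i₂ j ≠ 0 → i₁ = i₂

/-- A matrix is a strictly incoherent Kraus operator if each row and each
column contains at most one nonzero entry. -/
def IsStrictlyIncoherentKraus (K : Matrix (Fin 3) (Fin 3) ℂ) : Prop :=
  IsIncoherentKraus K ∧ IsIncoherentKraus Kᴴ

/-- `Φ` is a strictly incoherent operation (SIO) on a qutrit. -/
def IsSIO (Φ : Matrix (Fin 3) (Fin 3) ℂ → Matrix (Fin 3) (Fin 3) ℂ) : Prop :=
  ∃ (n : ℕ) (K : Fin n → Matrix (Fin 3) (Fin 3) ℂ),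
    (∀ i, IsStrictlyIncoherentKraus (K i)) ∧
    (∑ i, (K i)ᴴ * K i = 1) ∧
    (∀ ρ, Φ ρ = ∑ i, K i * ρ * (K i)ᴴ)

/-- The 3×3 matrix unit with a 1 in row `j`, column `k` (0-indexed). -/
def E (j k : Fin 3) : Matrix (Fin 3) (Fin 3) ℂ := Matrix.single j k 1

/-- The fixed basis of traceless Hermitian 3×3 matrices (Gell-Mann matrices in
the ordering of the paper). -/
noncomputable def gm : Fin 8 → Matrix (Fin 3) (Fin 3) ℂ :=
  ![E 0 1 + E 1 0,
    E 0 2 + E 2 0,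
    E 1 2 + E 2 1,
    (-Complex.I) • (E 0 1 - E 1 0),
    (-Complex.I) • (E 0 2 - E 2 0),
    (-Complex.I) • (E 1 2 - E 2 1),
    Matrix.diagonal ![1, -1, 0],
    ((Real.sqrt 3 : ℂ))⁻¹ • Matrix.diagonal ![1, 1, -2]]

/-- The `i`-th Bloch coordinate of a qutrit state: `tᵢ = Tr(ρ λᵢ)`. -/
noncomputable def bloch (ρ : Matrix (Fin 3) (Fin 3) ℂ) (i : Fin 8) : ℝ :=
  ((ρ * gm i).trace).re

open Finset

lemma kraus_entry {n : ℕ} (K : Fin n → Matrix (Fin 3) (Fin 3) ℂ)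
    (hinc : ∀ m, IsIncoherentKraus (K m))
    (ρ : Matrix (Fin 3) (Fin 3) ℂ)
    (p q : Fin 3) (hpq : p ≠ q)
    (hz : ∀ a b : Fin 3, a ≠ b → ¬(a = p ∧ b = q) → ¬(a = q ∧ b = p) → ρ a b = 0)
    (m : Fin n) :
    (K m * ρ * (K m)ᴴ) p q
      = K m p p * ρ p q * star (K m q q) + K m p q * ρ q p * star (K m q p) := by
  have key : (K m * ρ * (K m)ᴴ) p q = ∑ x : Fin 3 × Fin 3, K m p x.1 * ρ x.1 x.2 * star (K m q x.2) := by
    simp [Matrix.mul_apply, Matrix.conjTranspose_apply, Fintype.sum_prod_type, Finset.sum_mul,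
      Finset.mul_sum]
    rw [Finset.sum_comm]
  rw [key]
  rw [Finset.sum_eq_add_of_mem (p, q) (q, p) (by simp) (by simp) (by simp [Ne.symm hpq, hpq])]
  rintro x - ⟨h1, h2⟩
  rcases eq_or_ne x.1 x.2 with h | h
  · rcases eq_or_ne (K m p x.1) 0 with h0 | h0
    · simp [h0]
    rcases eq_or_ne (K m q x.2) 0 with h0' | h0'
    · simp [h0']
    exact absurd (hinc m x.1 p q h0 (h ▸ h0')) hpq
  · rw [hz x.1 x.2 h (fun hh => h1 (Prod.ext hh.1 hh.2)) (fun hh => h2 (Prod.ext hh.1 hh.2))]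
    ring
lemma colnorm {n : ℕ} (K : Fin n → Matrix (Fin 3) (Fin 3) ℂ)
    (hTP : ∑ m, (K m)ᴴ * K m = 1) (p : Fin 3) :
    ∑ m, ∑ r : Fin 3, ‖K m r p‖ ^ 2 = 1 := by
  have h : (∑ m, (K m)ᴴ * K m) p p = 1 := by rw [hTP]; simp [Matrix.one_apply]
  have h2 : (∑ m, ∑ r : Fin 3, star (K m r p) * K m r p) = (1 : ℂ) := by
    rw [← h]; simp [Matrix.sum_apply, Matrix.mul_apply, Matrix.conjTranspose_apply]
  have h3 := congrArg Complex.re h2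
  simp only [Complex.re_sum, Complex.one_re] at h3
  rw [← h3]
  refine Finset.sum_congr rfl fun m _ => Finset.sum_congr rfl fun r _ => ?_
  rw [← Complex.normSq_eq_norm_sq, Complex.normSq_apply]
  simp [Complex.mul_re]
lemma colnorm2 {n : ℕ} (K : Fin n → Matrix (Fin 3) (Fin 3) ℂ)
    (hTP : ∑ m, (K m)ᴴ * K m = 1) (p q a : Fin 3) (hpq : p ≠ q) :
    ∑ m, (‖K m p a‖ ^ 2 + ‖K m q a‖ ^ 2) ≤ 1 := by
  rw [← colnorm K hTP a]
  refine Finset.sum_le_sum fun m _ => ?_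
  have := Finset.sum_le_sum_of_subset_of_nonneg (Finset.subset_univ ({p, q} : Finset (Fin 3)))
    (fun r _ _ => by positivity : ∀ r ∈ Finset.univ, r ∉ ({p,q} : Finset (Fin 3)) → 0 ≤ ‖K m r a‖ ^ 2)
  rwa [Finset.sum_pair hpq] at this

lemma core {n : ℕ} (K : Fin n → Matrix (Fin 3) (Fin 3) ℂ)
    (hinc : ∀ m, IsIncoherentKraus (K m))
    (hTP : ∑ m, (K m)ᴴ * K m = 1)
    (ρ : Matrix (Fin 3) (Fin 3) ℂ) (hherm : ρᴴ = ρ)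
    (p q : Fin 3) (hpq : p ≠ q)
    (hz : ∀ a b : Fin 3, a ≠ b → ¬(a = p ∧ b = q) → ¬(a = q ∧ b = p) → ρ a b = 0) :
    ‖(∑ m, K m * ρ * (K m)ᴴ) p q‖ ≤ ‖ρ p q‖ := by
  have hqp : ρ q p = star (ρ p q) := by
    have := congrFun (congrFun hherm q) p
    simpa [Matrix.conjTranspose_apply] using this.symm
  have habsqp : ‖ρ q p‖ = ‖ρ p q‖ := by
    rw [hqp]; exact Complex.norm_conj _
  -- the coefficient sum
  set S : ℝ := ∑ m, (‖K m p p‖ * ‖K m q q‖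
      + ‖K m p q‖ * ‖K m q p‖) with hS
  have hSnonneg : 0 ≤ S := Finset.sum_nonneg fun m _ => by positivity
  have hS1 : S ≤ 1 := by
    have hcs := Finset.sum_mul_sq_le_sq_mul_sq Finset.univ
      (fun x : Fin n × Bool => if x.2 then ‖K x.1 q p‖ else ‖K x.1 p p‖)
      (fun x : Fin n × Bool => if x.2 then ‖K x.1 p q‖ else ‖K x.1 q q‖)
    simp only [Fintype.sum_prod_type, Fintype.sum_bool, Bool.false_eq_true, if_true, if_false] at hcs
    have e1 : ∑ m, (‖K m q p‖ * ‖K m p q‖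
        + ‖K m p p‖ * ‖K m q q‖) = S := by
      rw [hS]; refine Finset.sum_congr rfl fun m _ => by ring
    have e2 : ∑ m, (‖K m q p‖ ^ 2 + ‖K m p p‖ ^ 2) ≤ 1 := by
      have := colnorm2 K hTP p q p hpq
      refine le_trans (le_of_eq ?_) this
      exact Finset.sum_congr rfl fun m _ => by ring
    have e3 : ∑ m, (‖K m p q‖ ^ 2 + ‖K m q q‖ ^ 2) ≤ 1 := by
      have := colnorm2 K hTP q p q (Ne.symm hpq)
      refine le_trans (le_of_eq ?_) this
      exact Finset.sum_congr rfl fun m _ => by ring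
    rw [e1] at hcs
    have e2' : 0 ≤ ∑ m, (‖K m q p‖ ^ 2 + ‖K m p p‖ ^ 2) :=
      Finset.sum_nonneg fun m _ => by positivity
    have e3' : 0 ≤ ∑ m, (‖K m p q‖ ^ 2 + ‖K m q q‖ ^ 2) :=
      Finset.sum_nonneg fun m _ => by positivity
    nlinarith [hcs, e2, e3, hSnonneg]
  -- bound entry
  have hentry : (∑ m, K m * ρ * (K m)ᴴ) p q
      = ∑ m, (K m p p * ρ p q * star (K m q q) + K m p q * ρ q p * star (K m q p)) := by
    rw [Matrix.sum_apply]
    exact Finset.sum_congr rfl fun m _ => kraus_entry K hinc ρ p q hpq hz m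
  rw [hentry]
  calc ‖∑ m, (K m p p * ρ p q * star (K m q q) + K m p q * ρ q p * star (K m q p))‖
      ≤ ∑ m, ‖K m p p * ρ p q * star (K m q q) + K m p q * ρ q p * star (K m q p)‖ :=
        norm_sum_le _ _
    _ ≤ ∑ m, (‖K m p p‖ * ‖K m q q‖
        + ‖K m p q‖ * ‖K m q p‖) * ‖ρ p q‖ := by
        refine Finset.sum_le_sum fun m _ => ?_
        refine le_trans (norm_add_le _ _) ?_
        have e1 : ‖K m p p * ρ p q * star (K m q q)‖
            = ‖K m p p‖ * ‖ρ p q‖ * ‖K m q q‖ := by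
          simp [_root_.map_mul]
        have e2 : ‖K m p q * ρ q p * star (K m q p)‖
            = ‖K m p q‖ * ‖ρ p q‖ * ‖K m q p‖ := by
          simp [_root_.map_mul, habsqp]
        rw [e1, e2]; ring_nf; exact le_of_eq (by ring)
    _ = S * ‖ρ p q‖ := by rw [← Finset.sum_mul]
    _ ≤ 1 * ‖ρ p q‖ := by
        exact mul_le_mul_of_nonneg_right hS1 (norm_nonneg _)
    _ = ‖ρ p q‖ := one_mul _

lemma gm0 : gm 0 = E 0 1 + E 1 0 := rfl
lemma gm1 : gm 1 = E 0 2 + E 2 0 := rfl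
lemma gm2 : gm 2 = E 1 2 + E 2 1 := rfl
lemma gm3 : gm 3 = (-Complex.I) • (E 0 1 - E 1 0) := rfl
lemma gm4 : gm 4 = (-Complex.I) • (E 0 2 - E 2 0) := rfl
lemma gm5 : gm 5 = (-Complex.I) • (E 1 2 - E 2 1) := rfl

lemma star_entry (A : Matrix (Fin 3) (Fin 3) ℂ) (h : Aᴴ = A) (a b : Fin 3) :
    A b a = star (A a b) := by
  conv_lhs => rw [← h]
  simp [Matrix.conjTranspose_apply]

lemma b0 (A : Matrix (Fin 3) (Fin 3) ℂ) (h : Aᴴ = A) : bloch A 0 = 2*(A 0 1).re := by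
  simp [bloch, gm0, E, Matrix.trace_fin_three, Matrix.mul_apply, Fin.sum_univ_three,
    Matrix.single, star_entry A h 0 1]
  ring
lemma b1 (A : Matrix (Fin 3) (Fin 3) ℂ) (h : Aᴴ = A) : bloch A 1 = 2*(A 0 2).re := by
  simp [bloch, gm1, E, Matrix.trace_fin_three, Matrix.mul_apply, Fin.sum_univ_three,
    Matrix.single, star_entry A h 0 2]
  ring
lemma b2 (A : Matrix (Fin 3) (Fin 3) ℂ) (h : Aᴴ = A) : bloch A 2 = 2*(A 1 2).re := by
  simp [bloch, gm2, E, Matrix.trace_fin_three, Matrix.mul_apply, Fin.sum_univ_three,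
    Matrix.single, star_entry A h 1 2]
  ring
lemma b3 (A : Matrix (Fin 3) (Fin 3) ℂ) (h : Aᴴ = A) : bloch A 3 = -2*(A 0 1).im := by
  simp [bloch, gm3, E, Matrix.trace_fin_three, Matrix.mul_apply, Fin.sum_univ_three,
    Matrix.single, star_entry A h 0 1, Complex.mul_re]
  ring
lemma b4 (A : Matrix (Fin 3) (Fin 3) ℂ) (h : Aᴴ = A) : bloch A 4 = -2*(A 0 2).im := by
  simp [bloch, gm4, E, Matrix.trace_fin_three, Matrix.mul_apply, Fin.sum_univ_three,
    Matrix.single, star_entry A h 0 2, Complex.mul_re]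
  ring
lemma b5 (A : Matrix (Fin 3) (Fin 3) ℂ) (h : Aᴴ = A) : bloch A 5 = -2*(A 1 2).im := by
  simp [bloch, gm5, E, Matrix.trace_fin_three, Matrix.mul_apply, Fin.sum_univ_three,
    Matrix.single, star_entry A h 1 2, Complex.mul_re]
  ring

lemma final_real (w z : ℂ) (habs : ‖w‖ ≤ ‖z‖) (him : z.im = 0) :
    (2*w.re)^2 ≤ (2*z.re)^2 := by
  have h2 : ‖w‖ ^ 2 ≤ ‖z‖ ^ 2 :=
    pow_le_pow_left₀ (norm_nonneg _) habs 2
  rw [Complex.sq_norm, Complex.sq_norm, Complex.normSq_apply, Complex.normSq_apply] at h2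
  nlinarith [sq_nonneg w.im, sq_nonneg z.im]

lemma final_imag (w z : ℂ) (habs : ‖w‖ ≤ ‖z‖) (hre : z.re = 0) :
    (-2*w.im)^2 ≤ (-2*z.im)^2 := by
  have h2 : ‖w‖ ^ 2 ≤ ‖z‖ ^ 2 :=
    pow_le_pow_left₀ (norm_nonneg _) habs 2
  rw [Complex.sq_norm, Complex.sq_norm, Complex.normSq_apply, Complex.normSq_apply] at h2
  nlinarith [sq_nonneg w.re, sq_nonneg z.re]


theorem sio_bloch_condition1
    (Φ : Matrix (Fin 3) (Fin 3) ℂ → Matrix (Fin 3) (Fin 3) ℂ) (hΦ : IsSIO Φ)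
    (i j : Fin 8) (hi : (i : ℕ) < 6) (hj : 6 ≤ (j : ℕ))
    (ρ : Matrix (Fin 3) (Fin 3) ℂ) (hρ : ρ.PosSemidef) (htr : ρ.trace = 1)
    (hsupp : ∀ k : Fin 8, k ≠ i → k ≠ j → bloch ρ k = 0) :
    (bloch (Φ ρ) i) ^ 2 ≤ (bloch ρ i) ^ 2 := by
  obtain ⟨n, K, hK, hTP, hrep⟩ := hΦ
  have hherm : ρᴴ = ρ := hρ.1
  have hinc : ∀ m, IsIncoherentKraus (K m) := fun m => (hK m).1
  set M := ∑ m, K m * ρ * (K m)ᴴ with hM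
  have hΦρ : Φ ρ = M := hrep ρ
  have hMherm : Mᴴ = M := by
    rw [hM, Matrix.conjTranspose_sum]
    refine Finset.sum_congr rfl fun m _ => ?_
    rw [Matrix.conjTranspose_mul, Matrix.conjTranspose_mul, Matrix.conjTranspose_conjTranspose,
      hherm, Matrix.mul_assoc]
  have hkj : ∀ k : Fin 8, (k : ℕ) < 6 → k ≠ j := by
    intro k hk h
    rw [h] at hk; omega
  rw [hΦρ]
  have hcore := core K hinc hTP ρ hherm
  fin_cases i
  -- i = 0 : pair (0,1), real part
  · have h02 : ρ 0 2 = 0 := by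
      have e1 := hsupp 1 (by decide) (hkj 1 (by decide))
      have e2 := hsupp 4 (by decide) (hkj 4 (by decide))
      rw [b1 ρ hherm] at e1; rw [b4 ρ hherm] at e2
      exact Complex.ext (by simp; linarith) (by simp; linarith)
    have h12 : ρ 1 2 = 0 := by
      have e1 := hsupp 2 (by decide) (hkj 2 (by decide))
      have e2 := hsupp 5 (by decide) (hkj 5 (by decide))
      rw [b2 ρ hherm] at e1; rw [b5 ρ hherm] at e2
      exact Complex.ext (by simp; linarith) (by simp; linarith)
    have h20 : ρ 2 0 = 0 := by rw [star_entry ρ hherm 0 2, h02, star_zero]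
    have h21 : ρ 2 1 = 0 := by rw [star_entry ρ hherm 1 2, h12, star_zero]
    have him : (ρ 0 1).im = 0 := by
      have e := hsupp 3 (by decide) (hkj 3 (by decide))
      rw [b3 ρ hherm] at e; linarith
    have habs := hcore 0 1 (by decide) (by
      intro a b hab hne1 hne2
      fin_cases a <;> fin_cases b <;>
        first
          | exact absurd (by decide) hab
          | exact absurd (by decide) hne1
          | exact absurd (by decide) hne2
          | assumption)
    show (bloch M 0) ^ 2 ≤ (bloch ρ 0) ^ 2
    rw [b0 M hMherm, b0 ρ hherm]
    exact final_real _ _ habs him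
  -- i = 1 : pair (0,2), real part
  · have h01 : ρ 0 1 = 0 := by
      have e1 := hsupp 0 (by decide) (hkj 0 (by decide))
      have e2 := hsupp 3 (by decide) (hkj 3 (by decide))
      rw [b0 ρ hherm] at e1; rw [b3 ρ hherm] at e2
      exact Complex.ext (by simp; linarith) (by simp; linarith)
    have h12 : ρ 1 2 = 0 := by
      have e1 := hsupp 2 (by decide) (hkj 2 (by decide))
      have e2 := hsupp 5 (by decide) (hkj 5 (by decide))
      rw [b2 ρ hherm] at e1; rw [b5 ρ hherm] at e2
      exact Complex.ext (by simp; linarith) (by simp; linarith)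
    have h10 : ρ 1 0 = 0 := by rw [star_entry ρ hherm 0 1, h01, star_zero]
    have h21 : ρ 2 1 = 0 := by rw [star_entry ρ hherm 1 2, h12, star_zero]
    have him : (ρ 0 2).im = 0 := by
      have e := hsupp 4 (by decide) (hkj 4 (by decide))
      rw [b4 ρ hherm] at e; linarith
    have habs := hcore 0 2 (by decide) (by
      intro a b hab hne1 hne2
      fin_cases a <;> fin_cases b <;>
        first
          | exact absurd (by decide) hab
          | exact absurd (by decide) hne1
          | exact absurd (by decide) hne2
          | assumption)
    show (bloch M 1) ^ 2 ≤ (bloch ρ 1) ^ 2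
    rw [b1 M hMherm, b1 ρ hherm]
    exact final_real _ _ habs him
  -- i = 2 : pair (1,2), real part
  · have h01 : ρ 0 1 = 0 := by
      have e1 := hsupp 0 (by decide) (hkj 0 (by decide))
      have e2 := hsupp 3 (by decide) (hkj 3 (by decide))
      rw [b0 ρ hherm] at e1; rw [b3 ρ hherm] at e2
      exact Complex.ext (by simp; linarith) (by simp; linarith)
    have h02 : ρ 0 2 = 0 := by
      have e1 := hsupp 1 (by decide) (hkj 1 (by decide))
      have e2 := hsupp 4 (by decide) (hkj 4 (by decide))
      rw [b1 ρ hherm] at e1; rw [b4 ρ hherm] at e2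
      exact Complex.ext (by simp; linarith) (by simp; linarith)
    have h10 : ρ 1 0 = 0 := by rw [star_entry ρ hherm 0 1, h01, star_zero]
    have h20 : ρ 2 0 = 0 := by rw [star_entry ρ hherm 0 2, h02, star_zero]
    have him : (ρ 1 2).im = 0 := by
      have e := hsupp 5 (by decide) (hkj 5 (by decide))
      rw [b5 ρ hherm] at e; linarith
    have habs := hcore 1 2 (by decide) (by
      intro a b hab hne1 hne2
      fin_cases a <;> fin_cases b <;>
        first
          | exact absurd (by decide) hab
          | exact absurd (by decide) hne1
          | exact absurd (by decide) hne2
          | assumption)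
    show (bloch M 2) ^ 2 ≤ (bloch ρ 2) ^ 2
    rw [b2 M hMherm, b2 ρ hherm]
    exact final_real _ _ habs him
  -- i = 3 : pair (0,1), imaginary part
  · have h02 : ρ 0 2 = 0 := by
      have e1 := hsupp 1 (by decide) (hkj 1 (by decide))
      have e2 := hsupp 4 (by decide) (hkj 4 (by decide))
      rw [b1 ρ hherm] at e1; rw [b4 ρ hherm] at e2
      exact Complex.ext (by simp; linarith) (by simp; linarith)
    have h12 : ρ 1 2 = 0 := by
      have e1 := hsupp 2 (by decide) (hkj 2 (by decide))
      have e2 := hsupp 5 (by decide) (hkj 5 (by decide))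
      rw [b2 ρ hherm] at e1; rw [b5 ρ hherm] at e2
      exact Complex.ext (by simp; linarith) (by simp; linarith)
    have h20 : ρ 2 0 = 0 := by rw [star_entry ρ hherm 0 2, h02, star_zero]
    have h21 : ρ 2 1 = 0 := by rw [star_entry ρ hherm 1 2, h12, star_zero]
    have hre : (ρ 0 1).re = 0 := by
      have e := hsupp 0 (by decide) (hkj 0 (by decide))
      rw [b0 ρ hherm] at e; linarith
    have habs := hcore 0 1 (by decide) (by
      intro a b hab hne1 hne2
      fin_cases a <;> fin_cases b <;>
        first
          | exact absurd (by decide) hab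
          | exact absurd (by decide) hne1
          | exact absurd (by decide) hne2
          | assumption)
    show (bloch M 3) ^ 2 ≤ (bloch ρ 3) ^ 2
    rw [b3 M hMherm, b3 ρ hherm]
    exact final_imag _ _ habs hre
  -- i = 4 : pair (0,2), imaginary part
  · have h01 : ρ 0 1 = 0 := by
      have e1 := hsupp 0 (by decide) (hkj 0 (by decide))
      have e2 := hsupp 3 (by decide) (hkj 3 (by decide))
      rw [b0 ρ hherm] at e1; rw [b3 ρ hherm] at e2
      exact Complex.ext (by simp; linarith) (by simp; linarith)
    have h12 : ρ 1 2 = 0 := by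
      have e1 := hsupp 2 (by decide) (hkj 2 (by decide))
      have e2 := hsupp 5 (by decide) (hkj 5 (by decide))
      rw [b2 ρ hherm] at e1; rw [b5 ρ hherm] at e2
      exact Complex.ext (by simp; linarith) (by simp; linarith)
    have h10 : ρ 1 0 = 0 := by rw [star_entry ρ hherm 0 1, h01, star_zero]
    have h21 : ρ 2 1 = 0 := by rw [star_entry ρ hherm 1 2, h12, star_zero]
    have hre : (ρ 0 2).re = 0 := by
      have e := hsupp 1 (by decide) (hkj 1 (by decide))
      rw [b1 ρ hherm] at e; linarith
    have habs := hcore 0 2 (by decide) (by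
      intro a b hab hne1 hne2
      fin_cases a <;> fin_cases b <;>
        first
          | exact absurd (by decide) hab
          | exact absurd (by decide) hne1
          | exact absurd (by decide) hne2
          | assumption)
    show (bloch M 4) ^ 2 ≤ (bloch ρ 4) ^ 2
    rw [b4 M hMherm, b4 ρ hherm]
    exact final_imag _ _ habs hre
  -- i = 5 : pair (1,2), imaginary part
  · have h01 : ρ 0 1 = 0 := by
      have e1 := hsupp 0 (by decide) (hkj 0 (by decide))
      have e2 := hsupp 3 (by decide) (hkj 3 (by decide))
      rw [b0 ρ hherm] at e1; rw [b3 ρ hherm] at e2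
      exact Complex.ext (by simp; linarith) (by simp; linarith)
    have h02 : ρ 0 2 = 0 := by
      have e1 := hsupp 1 (by decide) (hkj 1 (by decide))
      have e2 := hsupp 4 (by decide) (hkj 4 (by decide))
      rw [b1 ρ hherm] at e1; rw [b4 ρ hherm] at e2
      exact Complex.ext (by simp; linarith) (by simp; linarith)
    have h10 : ρ 1 0 = 0 := by rw [star_entry ρ hherm 0 1, h01, star_zero]
    have h20 : ρ 2 0 = 0 := by rw [star_entry ρ hherm 0 2, h02, star_zero]
    have hre : (ρ 1 2).re = 0 := by
      have e := hsupp 2 (by decide) (hkj 2 (by decide))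
      rw [b2 ρ hherm] at e; linarith
    have habs := hcore 1 2 (by decide) (by
      intro a b hab hne1 hne2
      fin_cases a <;> fin_cases b <;>
        first
          | exact absurd (by decide) hab
          | exact absurd (by decide) hne1
          | exact absurd (by decide) hne2
          | assumption)
    show (bloch M 5) ^ 2 ≤ (bloch ρ 5) ^ 2
    rw [b5 M hMherm, b5 ρ hherm]
    exact final_imag _ _ habs hre
  · exact absurd hi (by norm_num)
  · exact absurd hi (by norm_num)
end

section
/- Let Φ be a strictly incoherent operation (SIO) on a single qutrit. Fix i, j ∈ {1, …, 6} with i < j and j ≠ i + 3, and let ρ be a qutrit density matrix whose Bloch vector t = (t₁, …, t₈) satisfies t_k = 0 for all k ∉ {i, j}. Let m = (m₁, …, m₈) be the Bloch vector of Φ(ρ). Then (|m_i| + |m_j|)² ≤ (|t_i| + |t_j|)². -/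
set_option maxHeartbeats 1000000


open Matrix ComplexOrder

open Finset

lemma bl0 (ρ : Matrix (Fin 3) (Fin 3) ℂ) : bloch ρ 0 = (ρ 0 1).re + (ρ 1 0).re := by
  have h : gm 0 = E 0 1 + E 1 0 := rfl
  simp [bloch, h, E, Matrix.trace, Matrix.diag, Matrix.mul_apply, Fin.sum_univ_three,
    Matrix.single]
lemma bl1 (ρ : Matrix (Fin 3) (Fin 3) ℂ) : bloch ρ 1 = (ρ 0 2).re + (ρ 2 0).re := by
  have h : gm 1 = E 0 2 + E 2 0 := rfl
  simp [bloch, h, E, Matrix.trace, Matrix.diag, Matrix.mul_apply, Fin.sum_univ_three,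
    Matrix.single]
lemma bl2 (ρ : Matrix (Fin 3) (Fin 3) ℂ) : bloch ρ 2 = (ρ 1 2).re + (ρ 2 1).re := by
  have h : gm 2 = E 1 2 + E 2 1 := rfl
  simp [bloch, h, E, Matrix.trace, Matrix.diag, Matrix.mul_apply, Fin.sum_univ_three,
    Matrix.single]
lemma bl3 (ρ : Matrix (Fin 3) (Fin 3) ℂ) : bloch ρ 3 = (ρ 1 0).im - (ρ 0 1).im := by
  have h : gm 3 = (-Complex.I) • (E 0 1 - E 1 0) := rfl
  simp [bloch, h, E, Matrix.trace, Matrix.diag, Matrix.mul_apply, Fin.sum_univ_three,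
    Matrix.single]
  ring
lemma bl4 (ρ : Matrix (Fin 3) (Fin 3) ℂ) : bloch ρ 4 = (ρ 2 0).im - (ρ 0 2).im := by
  have h : gm 4 = (-Complex.I) • (E 0 2 - E 2 0) := rfl
  simp [bloch, h, E, Matrix.trace, Matrix.diag, Matrix.mul_apply, Fin.sum_univ_three,
    Matrix.single]
  ring
lemma bl5 (ρ : Matrix (Fin 3) (Fin 3) ℂ) : bloch ρ 5 = (ρ 2 1).im - (ρ 1 2).im := by
  have h : gm 5 = (-Complex.I) • (E 1 2 - E 2 1) := rfl
  simp [bloch, h, E, Matrix.trace, Matrix.diag, Matrix.mul_apply, Fin.sum_univ_three,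
    Matrix.single]
  ring

lemma abs_eq_re (z : ℂ) (h : z.im = 0) : ‖z‖ = |z.re| := by
  rw [Complex.norm_def, Complex.normSq_apply, h]
  simpa using Real.sqrt_mul_self_eq_abs z.re

lemma abs_eq_im (z : ℂ) (h : z.re = 0) : ‖z‖ = |z.im| := by
  rw [Complex.norm_def, Complex.normSq_apply, h]
  simpa using Real.sqrt_mul_self_eq_abs z.im

lemma re_exact (z w : ℂ) (hw : w = (starRingEnd ℂ) z) (h0 : w.im - z.im = 0) :
    |z.re + w.re| = 2 * ‖z‖ := by
  subst hw
  have him : z.im = 0 := by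
    simp only [Complex.conj_im] at h0; linarith
  rw [Complex.conj_re, abs_eq_re z him, show z.re + z.re = 2 * z.re by ring, abs_mul]
  norm_num

lemma im_exact (z w : ℂ) (hw : w = (starRingEnd ℂ) z) (h0 : z.re + w.re = 0) :
    |w.im - z.im| = 2 * ‖z‖ := by
  subst hw
  have hre : z.re = 0 := by
    simp only [Complex.conj_re] at h0; linarith
  rw [Complex.conj_im, abs_eq_im z hre, show -z.im - z.im = (-2) * z.im by ring, abs_mul]
  norm_num

lemma re_bound (z w : ℂ) (hw : w = (starRingEnd ℂ) z) :
    |z.re + w.re| ≤ 2 * ‖z‖ := by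
  subst hw
  rw [Complex.conj_re, show z.re + z.re = 2 * z.re by ring, abs_mul]
  have := Complex.abs_re_le_norm z
  norm_num
  linarith

lemma im_bound (z w : ℂ) (hw : w = (starRingEnd ℂ) z) :
    |w.im - z.im| ≤ 2 * ‖z‖ := by
  subst hw
  rw [Complex.conj_im, show -z.im - z.im = (-2) * z.im by ring, abs_mul]
  have := Complex.abs_im_le_norm z
  norm_num
  linarith

lemma entry_zero (z w : ℂ) (hw : w = (starRingEnd ℂ) z) (hre : z.re + w.re = 0)
    (him : w.im - z.im = 0) : z = 0 ∧ w = 0 := by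
  subst hw
  simp only [Complex.conj_re, Complex.conj_im] at hre him
  have h1 : z.re = 0 := by linarith
  have h2 : z.im = 0 := by linarith
  have : z = 0 := Complex.ext h1 h2
  simp [this]

lemma entry_expand {n : ℕ} (K : Fin n → Matrix (Fin 3) (Fin 3) ℂ) (ρ : Matrix (Fin 3) (Fin 3) ℂ)
    (m : Fin n) (a b : Fin 3) :
    (K m * ρ * (K m)ᴴ) a b
      = ∑ pq ∈ (univ : Finset (Fin 3 × Fin 3)), K m a pq.1 * ρ pq.1 pq.2 * (starRingEnd ℂ) ((K m) b pq.2) := by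
  rw [← Finset.univ_product_univ, Finset.sum_product]
  simp only [Matrix.mul_apply, Matrix.conjTranspose_apply, Finset.sum_mul, Finset.mul_sum]
  rw [Finset.sum_comm]
  rfl

lemma key {n : ℕ} (K : Fin n → Matrix (Fin 3) (Fin 3) ℂ)
    (hK : ∀ m, IsStrictlyIncoherentKraus (K m))
    (hnorm : ∑ m, (K m)ᴴ * K m = 1)
    (ρ : Matrix (Fin 3) (Fin 3) ℂ)
    (hconj : ∀ p q, ρ q p = (starRingEnd ℂ) (ρ p q))
    (a1 b1 a2 b2 : Fin 3)
    (h1 : a1 ≠ b1) (h2 : a2 ≠ b2) (h3 : (a1,b1) ≠ (a2,b2)) (h4 : (a1,b1) ≠ (b2,a2))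
    (hz : ∀ p q : Fin 3, p ≠ q → (p,q) ≠ (a1,b1) → (p,q) ≠ (b1,a1) → (p,q) ≠ (a2,b2) → (p,q) ≠ (b2,a2) → ρ p q = 0) :
    ‖(∑ m, K m * ρ * (K m)ᴴ) a1 b1‖ + ‖(∑ m, K m * ρ * (K m)ᴴ) a2 b2‖
      ≤ ‖ρ a1 b1‖ + ‖ρ a2 b2‖ := by
  classical
  -- distinctness of the four ordered pairs
  have d12 : ((a1,b1) : Fin 3 × Fin 3) ≠ (b1,a1) := fun h => h1 (congrArg Prod.fst h)
  have d23 : ((b1,a1) : Fin 3 × Fin 3) ≠ (a2,b2) := fun h =>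
    h4 (Prod.ext_iff.mpr ⟨(Prod.ext_iff.mp h).2, (Prod.ext_iff.mp h).1⟩)
  have d24 : ((b1,a1) : Fin 3 × Fin 3) ≠ (b2,a2) := fun h =>
    h3 (Prod.ext_iff.mpr ⟨(Prod.ext_iff.mp h).2, (Prod.ext_iff.mp h).1⟩)
  have d34 : ((a2,b2) : Fin 3 × Fin 3) ≠ (b2,a2) := fun h => h2 (congrArg Prod.fst h)
  -- the support set
  set S : Finset (Fin 3 × Fin 3) := {(a1,b1),(b1,a1),(a2,b2),(b2,a2)} with hS
  have hSsum : ∀ (f : Fin 3 × Fin 3 → ℝ),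
      ∑ pq ∈ S, f pq = f (a1,b1) + f (b1,a1) + f (a2,b2) + f (b2,a2) := by
    intro f
    rw [hS]
    rw [Finset.sum_insert (by simp [d12, h3, h4]),
        Finset.sum_insert (by simp [d23, d24]),
        Finset.sum_insert (by simp [d34]), Finset.sum_singleton]
    ring
  -- column products vanish
  have hcol : ∀ m (c r s : Fin 3), r ≠ s → ‖K m r c‖ * ‖K m s c‖ = 0 := by
    intro m c r s hrs
    rcases eq_or_ne (K m r c) 0 with h | h
    · simp [h]
    · have : K m s c = 0 := by
        by_contra hs; exact hrs ((hK m).1 c r s h hs)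
      simp [this]
  -- restriction of the entry sum to S
  have hsub : ∀ m (a b : Fin 3), a ≠ b → (K m * ρ * (K m)ᴴ) a b
      = ∑ pq ∈ S, K m a pq.1 * ρ pq.1 pq.2 * (starRingEnd ℂ) (K m b pq.2) := by
    intro m a b hab
    rw [entry_expand]
    refine (Finset.sum_subset (Finset.subset_univ S) ?_).symm
    intro pq _ hpq
    rcases eq_or_ne pq.1 pq.2 with hd | hd
    · rcases eq_or_ne (K m a pq.1) 0 with h0 | h0
      · simp [h0]
      · have : K m b pq.2 = 0 := by
          by_contra hb
          exact hab ((hK m).1 pq.1 a b h0 (by rw [hd]; exact hb))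
        simp [this]
    · have : ρ pq.1 pq.2 = 0 := by
        refine hz _ _ hd ?_ ?_ ?_ ?_ <;>
          · intro h
            exact hpq (by rw [hS, ← Prod.mk.eta (p := pq), h]; simp)
      simp [this]
  -- abs bound per Kraus operator per target
  have habs : ∀ m (a b : Fin 3), a ≠ b →
      ‖(K m * ρ * (K m)ᴴ) a b‖
        ≤ ∑ pq ∈ S, ‖K m a pq.1‖ * ‖ρ pq.1 pq.2‖ * ‖K m b pq.2‖ := by
    intro m a b hab
    rw [hsub m a b hab]
    refine le_trans (norm_sum_le _ _) (le_of_eq ?_)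
    refine Finset.sum_congr rfl fun pq _ => ?_
    rw [norm_mul, norm_mul, Complex.norm_conj]
  -- abbreviations
  set x := ‖ρ a1 b1‖ with hxdef
  set y := ‖ρ a2 b2‖ with hydef
  have hx0 : 0 ≤ x := norm_nonneg _
  have hy0 : 0 ≤ y := norm_nonneg _
  have hx' : ‖ρ b1 a1‖ = x := by rw [hconj a1 b1, Complex.norm_conj]
  have hy' : ‖ρ b2 a2‖ = y := by rw [hconj a2 b2, Complex.norm_conj]
  -- product of column 1-norms dominates the S-sum of cross products
  have hLL : ∀ m (c d : Fin 3),
      (∑ pq ∈ S, ‖K m pq.1 c‖ * ‖K m pq.2 d‖)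
        ≤ (∑ r, ‖K m r c‖) * (∑ r, ‖K m r d‖) := by
    intro m c d
    have huniv : (∑ r, ‖K m r c‖) * (∑ r, ‖K m r d‖)
        = ∑ pq ∈ (univ : Finset (Fin 3 × Fin 3)), ‖K m pq.1 c‖ * ‖K m pq.2 d‖ := by
      rw [← Finset.univ_product_univ, Finset.sum_product, Finset.sum_mul_sum]
    rw [huniv]
    exact Finset.sum_le_sum_of_subset_of_nonneg (Finset.subset_univ S)
      (fun pq _ _ => by positivity)
  -- square of a column 1-norm equals the column 2-norm squared
  have hLsq : ∀ m (c : Fin 3),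
      (∑ r, ‖K m r c‖) * (∑ r, ‖K m r c‖)
        = ∑ r, ‖K m r c‖ * ‖K m r c‖ := by
    intro m c
    have h01 := hcol m c 0 1 (by decide)
    have h02 := hcol m c 0 2 (by decide)
    have h12 := hcol m c 1 2 (by decide)
    simp only [Fin.sum_univ_three]
    linear_combination 2*h01 + 2*h02 + 2*h12
  -- normalization
  have hsum1 : ∀ c : Fin 3, ∑ m, (∑ r, ‖K m r c‖ * ‖K m r c‖) = 1 := by
    intro c
    have h' : (∑ m, ((K m)ᴴ * K m)) c c = (1 : Matrix (Fin 3) (Fin 3) ℂ) c c := by rw [hnorm]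
    rw [Matrix.sum_apply, Matrix.one_apply_eq] at h'
    have h2 : ∑ m, (∑ r, (starRingEnd ℂ) (K m r c) * K m r c) = (1 : ℂ) := by
      rw [← h']
      refine Finset.sum_congr rfl fun m _ => ?_
      rw [Matrix.mul_apply]
      exact Finset.sum_congr rfl fun r _ => by rw [Matrix.conjTranspose_apply]; rfl
    have h3 := congrArg Complex.re h2
    rw [Complex.re_sum] at h3
    simp only [Complex.re_sum, Complex.one_re] at h3
    rw [← h3]
    · refine Finset.sum_congr rfl fun m _ => ?_
      refine Finset.sum_congr rfl fun r _ => ?_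
      rw [← sq, Complex.sq_norm]
      simp [Complex.mul_re, Complex.normSq_apply]
  -- per Kraus operator bound
  have hm : ∀ m, ‖(K m * ρ * (K m)ᴴ) a1 b1‖ + ‖(K m * ρ * (K m)ᴴ) a2 b2‖
      ≤ x * ((∑ r, ‖K m r a1‖ * ‖K m r a1‖)
              + (∑ r, ‖K m r b1‖ * ‖K m r b1‖)) / 2
        + y * ((∑ r, ‖K m r a2‖ * ‖K m r a2‖)
              + (∑ r, ‖K m r b2‖ * ‖K m r b2‖)) / 2 := by
    intro m
    have hb1 := habs m a1 b1 h1
    have hb2 := habs m a2 b2 h2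
    rw [hSsum] at hb1 hb2
    simp only at hb1 hb2
    rw [hx', hy'] at hb1 hb2
    have e1 := hLL m a1 b1
    have e2 := hLL m a2 b2
    rw [hSsum] at e1 e2
    simp only at e1 e2
    have g1 : (∑ r, ‖K m r a1‖) * (∑ r, ‖K m r b1‖)
        ≤ ((∑ r, ‖K m r a1‖ * ‖K m r a1‖)
            + (∑ r, ‖K m r b1‖ * ‖K m r b1‖)) / 2 := by
      nlinarith [sq_nonneg ((∑ r, ‖K m r a1‖) - (∑ r, ‖K m r b1‖)),
        hLsq m a1, hLsq m b1]
    have g2 : (∑ r, ‖K m r a2‖) * (∑ r, ‖K m r b2‖)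
        ≤ ((∑ r, ‖K m r a2‖ * ‖K m r a2‖)
            + (∑ r, ‖K m r b2‖ * ‖K m r b2‖)) / 2 := by
      nlinarith [sq_nonneg ((∑ r, ‖K m r a2‖) - (∑ r, ‖K m r b2‖)),
        hLsq m a2, hLsq m b2]
    nlinarith [mul_le_mul_of_nonneg_left e1 hx0, mul_le_mul_of_nonneg_left e2 hy0,
      mul_le_mul_of_nonneg_left g1 hx0, mul_le_mul_of_nonneg_left g2 hy0, hb1, hb2]
  -- assemble
  have hA1 : ‖(∑ m, K m * ρ * (K m)ᴴ) a1 b1‖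
      ≤ ∑ m, ‖(K m * ρ * (K m)ᴴ) a1 b1‖ := by
    rw [Matrix.sum_apply]; exact norm_sum_le _ _
  have hA2 : ‖(∑ m, K m * ρ * (K m)ᴴ) a2 b2‖
      ≤ ∑ m, ‖(K m * ρ * (K m)ᴴ) a2 b2‖ := by
    rw [Matrix.sum_apply]; exact norm_sum_le _ _
  have hbig : ∑ m, (‖(K m * ρ * (K m)ᴴ) a1 b1‖ + ‖(K m * ρ * (K m)ᴴ) a2 b2‖)
      ≤ ∑ m, (x * ((∑ r, ‖K m r a1‖ * ‖K m r a1‖)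
              + (∑ r, ‖K m r b1‖ * ‖K m r b1‖)) / 2
        + y * ((∑ r, ‖K m r a2‖ * ‖K m r a2‖)
              + (∑ r, ‖K m r b2‖ * ‖K m r b2‖)) / 2) :=
    Finset.sum_le_sum fun m _ => hm m
  have heval : ∑ m, (x * ((∑ r, ‖K m r a1‖ * ‖K m r a1‖)
              + (∑ r, ‖K m r b1‖ * ‖K m r b1‖)) / 2
        + y * ((∑ r, ‖K m r a2‖ * ‖K m r a2‖)
              + (∑ r, ‖K m r b2‖ * ‖K m r b2‖)) / 2) = x + y := by
    rw [Finset.sum_add_distrib, ← Finset.sum_div, ← Finset.sum_div, ← Finset.mul_sum, ← Finset.mul_sum,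
      Finset.sum_add_distrib, Finset.sum_add_distrib, hsum1 a1, hsum1 b1, hsum1 a2, hsum1 b2]
    ring
  have hsplit : ∑ m, (‖(K m * ρ * (K m)ᴴ) a1 b1‖ + ‖(K m * ρ * (K m)ᴴ) a2 b2‖)
      = ∑ m, ‖(K m * ρ * (K m)ᴴ) a1 b1‖ + ∑ m, ‖(K m * ρ * (K m)ᴴ) a2 b2‖ :=
    Finset.sum_add_distrib
  linarith

lemma endgame (Φ : Matrix (Fin 3) (Fin 3) ℂ → Matrix (Fin 3) (Fin 3) ℂ) (hΦ : IsSIO Φ)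
    (ρ : Matrix (Fin 3) (Fin 3) ℂ)
    (hc : ∀ p q : Fin 3, ρ q p = (starRingEnd ℂ) (ρ p q))
    (i j : Fin 8) (a1 b1 a2 b2 : Fin 3)
    (h1 : a1 ≠ b1) (h2 : a2 ≠ b2) (h3 : (a1,b1) ≠ (a2,b2)) (h4 : (a1,b1) ≠ (b2,a2))
    (hz : ∀ p q : Fin 3, p ≠ q → (p,q) ≠ (a1,b1) → (p,q) ≠ (b1,a1) → (p,q) ≠ (a2,b2) →
      (p,q) ≠ (b2,a2) → ρ p q = 0)
    (hti : |bloch ρ i| = 2 * ‖ρ a1 b1‖)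
    (htj : |bloch ρ j| = 2 * ‖ρ a2 b2‖)
    (hmi : |bloch (Φ ρ) i| ≤ 2 * ‖(Φ ρ) a1 b1‖)
    (hmj : |bloch (Φ ρ) j| ≤ 2 * ‖(Φ ρ) a2 b2‖) :
    (|bloch (Φ ρ) i| + |bloch (Φ ρ) j|) ^ 2 ≤ (|bloch ρ i| + |bloch ρ j|) ^ 2 := by
  obtain ⟨n, K, hK, hnorm, hrep⟩ := hΦ
  have hkey := key K hK hnorm ρ hc a1 b1 a2 b2 h1 h2 h3 h4 hz
  rw [← hrep ρ] at hkey
  have h0 : 0 ≤ |bloch (Φ ρ) i| + |bloch (Φ ρ) j| := by positivity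
  refine pow_le_pow_left₀ h0 ?_ 2
  linarith

theorem sio_bloch_condition4
    (Φ : Matrix (Fin 3) (Fin 3) ℂ → Matrix (Fin 3) (Fin 3) ℂ) (hΦ : IsSIO Φ)
    (i j : Fin 8) (hi : (i : ℕ) < 6) (hj : (j : ℕ) < 6)
    (hij : i < j) (hne : (j : ℕ) ≠ (i : ℕ) + 3)
    (ρ : Matrix (Fin 3) (Fin 3) ℂ) (hρ : ρ.PosSemidef) (htr : ρ.trace = 1)
    (hsupp : ∀ k : Fin 8, k ≠ i → k ≠ j → bloch ρ k = 0) :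
    (|bloch (Φ ρ) i| + |bloch (Φ ρ) j|) ^ 2 ≤ (|bloch ρ i| + |bloch ρ j|) ^ 2 := by
  have hH : ρᴴ = ρ := hρ.1
  have hc : ∀ p q : Fin 3, ρ q p = (starRingEnd ℂ) (ρ p q) := by
    intro p q
    conv_lhs => rw [← hH]
    rw [Matrix.conjTranspose_apply]
    rfl
  have hΦH : (Φ ρ)ᴴ = Φ ρ := by
    obtain ⟨n, K, hK, hnorm, hrep⟩ := hΦ
    rw [hrep ρ, Matrix.conjTranspose_sum]
    refine Finset.sum_congr rfl fun m _ => ?_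
    rw [Matrix.conjTranspose_mul, Matrix.conjTranspose_mul, Matrix.conjTranspose_conjTranspose,
      hH, Matrix.mul_assoc]
  have hΦc : ∀ p q : Fin 3, (Φ ρ) q p = (starRingEnd ℂ) ((Φ ρ) p q) := by
    intro p q
    conv_lhs => rw [← hΦH]
    rw [Matrix.conjTranspose_apply]
    rfl
  rw [Fin.lt_def] at hij
  have hv : ((i : ℕ) = 0 ∧ (j : ℕ) = 1) ∨ ((i : ℕ) = 0 ∧ (j : ℕ) = 2) ∨
      ((i : ℕ) = 0 ∧ (j : ℕ) = 4) ∨ ((i : ℕ) = 0 ∧ (j : ℕ) = 5) ∨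
      ((i : ℕ) = 1 ∧ (j : ℕ) = 2) ∨ ((i : ℕ) = 1 ∧ (j : ℕ) = 3) ∨
      ((i : ℕ) = 1 ∧ (j : ℕ) = 5) ∨ ((i : ℕ) = 2 ∧ (j : ℕ) = 3) ∨
      ((i : ℕ) = 2 ∧ (j : ℕ) = 4) ∨ ((i : ℕ) = 3 ∧ (j : ℕ) = 4) ∨
      ((i : ℕ) = 3 ∧ (j : ℕ) = 5) ∨ ((i : ℕ) = 4 ∧ (j : ℕ) = 5) := by omega
  rcases hv with ⟨h1,h2⟩|⟨h1,h2⟩|⟨h1,h2⟩|⟨h1,h2⟩|⟨h1,h2⟩|⟨h1,h2⟩|⟨h1,h2⟩|⟨h1,h2⟩|⟨h1,h2⟩|⟨h1,h2⟩|⟨h1,h2⟩|⟨h1,h2⟩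
  · have hi' : i = 0 := Fin.eq_of_val_eq h1
    have hj' : j = 1 := Fin.eq_of_val_eq h2
    subst hi'; subst hj'
    have zth := entry_zero (ρ 1 2) (ρ 2 1) (hc 1 2)
      (by rw [← bl2 ρ]; exact hsupp 2 (by decide) (by decide))
      (by rw [← bl5 ρ]; exact hsupp 5 (by decide) (by decide))
    have z1 := zth.1
    have z2 := zth.2
    refine endgame Φ hΦ ρ hc 0 1 0 1 0 2 (by decide) (by decide) (by decide)
      (by decide) ?_ ?_ ?_ ?_ ?_
    · intro p q hpq e1 e2 e3 e4
      have hmem : (p = 1 ∧ q = 2) ∨ (p = 2 ∧ q = 1) := by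
        revert p q
        decide
      rcases hmem with ⟨hp, hq⟩ | ⟨hp, hq⟩ <;> subst hp <;> subst hq
      · exact z1
      · exact z2
    · rw [bl0 ρ]
      exact re_exact _ _ (hc 0 1)
        (by rw [← bl3 ρ]; exact hsupp 3 (by decide) (by decide))
    · rw [bl1 ρ]
      exact re_exact _ _ (hc 0 2)
        (by rw [← bl4 ρ]; exact hsupp 4 (by decide) (by decide))
    · rw [bl0 (Φ ρ)]
      exact re_bound _ _ (hΦc 0 1)
    · rw [bl1 (Φ ρ)]
      exact re_bound _ _ (hΦc 0 2)
  · have hi' : i = 0 := Fin.eq_of_val_eq h1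
    have hj' : j = 2 := Fin.eq_of_val_eq h2
    subst hi'; subst hj'
    have zth := entry_zero (ρ 0 2) (ρ 2 0) (hc 0 2)
      (by rw [← bl1 ρ]; exact hsupp 1 (by decide) (by decide))
      (by rw [← bl4 ρ]; exact hsupp 4 (by decide) (by decide))
    have z1 := zth.1
    have z2 := zth.2
    refine endgame Φ hΦ ρ hc 0 2 0 1 1 2 (by decide) (by decide) (by decide)
      (by decide) ?_ ?_ ?_ ?_ ?_
    · intro p q hpq e1 e2 e3 e4
      have hmem : (p = 0 ∧ q = 2) ∨ (p = 2 ∧ q = 0) := by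
        revert p q
        decide
      rcases hmem with ⟨hp, hq⟩ | ⟨hp, hq⟩ <;> subst hp <;> subst hq
      · exact z1
      · exact z2
    · rw [bl0 ρ]
      exact re_exact _ _ (hc 0 1)
        (by rw [← bl3 ρ]; exact hsupp 3 (by decide) (by decide))
    · rw [bl2 ρ]
      exact re_exact _ _ (hc 1 2)
        (by rw [← bl5 ρ]; exact hsupp 5 (by decide) (by decide))
    · rw [bl0 (Φ ρ)]
      exact re_bound _ _ (hΦc 0 1)
    · rw [bl2 (Φ ρ)]
      exact re_bound _ _ (hΦc 1 2)
  · have hi' : i = 0 := Fin.eq_of_val_eq h1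
    have hj' : j = 4 := Fin.eq_of_val_eq h2
    subst hi'; subst hj'
    have zth := entry_zero (ρ 1 2) (ρ 2 1) (hc 1 2)
      (by rw [← bl2 ρ]; exact hsupp 2 (by decide) (by decide))
      (by rw [← bl5 ρ]; exact hsupp 5 (by decide) (by decide))
    have z1 := zth.1
    have z2 := zth.2
    refine endgame Φ hΦ ρ hc 0 4 0 1 0 2 (by decide) (by decide) (by decide)
      (by decide) ?_ ?_ ?_ ?_ ?_
    · intro p q hpq e1 e2 e3 e4
      have hmem : (p = 1 ∧ q = 2) ∨ (p = 2 ∧ q = 1) := by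
        revert p q
        decide
      rcases hmem with ⟨hp, hq⟩ | ⟨hp, hq⟩ <;> subst hp <;> subst hq
      · exact z1
      · exact z2
    · rw [bl0 ρ]
      exact re_exact _ _ (hc 0 1)
        (by rw [← bl3 ρ]; exact hsupp 3 (by decide) (by decide))
    · rw [bl4 ρ]
      exact im_exact _ _ (hc 0 2)
        (by rw [← bl1 ρ]; exact hsupp 1 (by decide) (by decide))
    · rw [bl0 (Φ ρ)]
      exact re_bound _ _ (hΦc 0 1)
    · rw [bl4 (Φ ρ)]
      exact im_bound _ _ (hΦc 0 2)
  · have hi' : i = 0 := Fin.eq_of_val_eq h1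
    have hj' : j = 5 := Fin.eq_of_val_eq h2
    subst hi'; subst hj'
    have zth := entry_zero (ρ 0 2) (ρ 2 0) (hc 0 2)
      (by rw [← bl1 ρ]; exact hsupp 1 (by decide) (by decide))
      (by rw [← bl4 ρ]; exact hsupp 4 (by decide) (by decide))
    have z1 := zth.1
    have z2 := zth.2
    refine endgame Φ hΦ ρ hc 0 5 0 1 1 2 (by decide) (by decide) (by decide)
      (by decide) ?_ ?_ ?_ ?_ ?_
    · intro p q hpq e1 e2 e3 e4
      have hmem : (p = 0 ∧ q = 2) ∨ (p = 2 ∧ q = 0) := by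
        revert p q
        decide
      rcases hmem with ⟨hp, hq⟩ | ⟨hp, hq⟩ <;> subst hp <;> subst hq
      · exact z1
      · exact z2
    · rw [bl0 ρ]
      exact re_exact _ _ (hc 0 1)
        (by rw [← bl3 ρ]; exact hsupp 3 (by decide) (by decide))
    · rw [bl5 ρ]
      exact im_exact _ _ (hc 1 2)
        (by rw [← bl2 ρ]; exact hsupp 2 (by decide) (by decide))
    · rw [bl0 (Φ ρ)]
      exact re_bound _ _ (hΦc 0 1)
    · rw [bl5 (Φ ρ)]
      exact im_bound _ _ (hΦc 1 2)
  · have hi' : i = 1 := Fin.eq_of_val_eq h1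
    have hj' : j = 2 := Fin.eq_of_val_eq h2
    subst hi'; subst hj'
    have zth := entry_zero (ρ 0 1) (ρ 1 0) (hc 0 1)
      (by rw [← bl0 ρ]; exact hsupp 0 (by decide) (by decide))
      (by rw [← bl3 ρ]; exact hsupp 3 (by decide) (by decide))
    have z1 := zth.1
    have z2 := zth.2
    refine endgame Φ hΦ ρ hc 1 2 0 2 1 2 (by decide) (by decide) (by decide)
      (by decide) ?_ ?_ ?_ ?_ ?_
    · intro p q hpq e1 e2 e3 e4
      have hmem : (p = 0 ∧ q = 1) ∨ (p = 1 ∧ q = 0) := by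
        revert p q
        decide
      rcases hmem with ⟨hp, hq⟩ | ⟨hp, hq⟩ <;> subst hp <;> subst hq
      · exact z1
      · exact z2
    · rw [bl1 ρ]
      exact re_exact _ _ (hc 0 2)
        (by rw [← bl4 ρ]; exact hsupp 4 (by decide) (by decide))
    · rw [bl2 ρ]
      exact re_exact _ _ (hc 1 2)
        (by rw [← bl5 ρ]; exact hsupp 5 (by decide) (by decide))
    · rw [bl1 (Φ ρ)]
      exact re_bound _ _ (hΦc 0 2)
    · rw [bl2 (Φ ρ)]
      exact re_bound _ _ (hΦc 1 2)
  · have hi' : i = 1 := Fin.eq_of_val_eq h1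
    have hj' : j = 3 := Fin.eq_of_val_eq h2
    subst hi'; subst hj'
    have zth := entry_zero (ρ 1 2) (ρ 2 1) (hc 1 2)
      (by rw [← bl2 ρ]; exact hsupp 2 (by decide) (by decide))
      (by rw [← bl5 ρ]; exact hsupp 5 (by decide) (by decide))
    have z1 := zth.1
    have z2 := zth.2
    refine endgame Φ hΦ ρ hc 1 3 0 2 0 1 (by decide) (by decide) (by decide)
      (by decide) ?_ ?_ ?_ ?_ ?_
    · intro p q hpq e1 e2 e3 e4
      have hmem : (p = 1 ∧ q = 2) ∨ (p = 2 ∧ q = 1) := by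
        revert p q
        decide
      rcases hmem with ⟨hp, hq⟩ | ⟨hp, hq⟩ <;> subst hp <;> subst hq
      · exact z1
      · exact z2
    · rw [bl1 ρ]
      exact re_exact _ _ (hc 0 2)
        (by rw [← bl4 ρ]; exact hsupp 4 (by decide) (by decide))
    · rw [bl3 ρ]
      exact im_exact _ _ (hc 0 1)
        (by rw [← bl0 ρ]; exact hsupp 0 (by decide) (by decide))
    · rw [bl1 (Φ ρ)]
      exact re_bound _ _ (hΦc 0 2)
    · rw [bl3 (Φ ρ)]
      exact im_bound _ _ (hΦc 0 1)
  · have hi' : i = 1 := Fin.eq_of_val_eq h1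
    have hj' : j = 5 := Fin.eq_of_val_eq h2
    subst hi'; subst hj'
    have zth := entry_zero (ρ 0 1) (ρ 1 0) (hc 0 1)
      (by rw [← bl0 ρ]; exact hsupp 0 (by decide) (by decide))
      (by rw [← bl3 ρ]; exact hsupp 3 (by decide) (by decide))
    have z1 := zth.1
    have z2 := zth.2
    refine endgame Φ hΦ ρ hc 1 5 0 2 1 2 (by decide) (by decide) (by decide)
      (by decide) ?_ ?_ ?_ ?_ ?_
    · intro p q hpq e1 e2 e3 e4
      have hmem : (p = 0 ∧ q = 1) ∨ (p = 1 ∧ q = 0) := by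
        revert p q
        decide
      rcases hmem with ⟨hp, hq⟩ | ⟨hp, hq⟩ <;> subst hp <;> subst hq
      · exact z1
      · exact z2
    · rw [bl1 ρ]
      exact re_exact _ _ (hc 0 2)
        (by rw [← bl4 ρ]; exact hsupp 4 (by decide) (by decide))
    · rw [bl5 ρ]
      exact im_exact _ _ (hc 1 2)
        (by rw [← bl2 ρ]; exact hsupp 2 (by decide) (by decide))
    · rw [bl1 (Φ ρ)]
      exact re_bound _ _ (hΦc 0 2)
    · rw [bl5 (Φ ρ)]
      exact im_bound _ _ (hΦc 1 2)
  · have hi' : i = 2 := Fin.eq_of_val_eq h1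
    have hj' : j = 3 := Fin.eq_of_val_eq h2
    subst hi'; subst hj'
    have zth := entry_zero (ρ 0 2) (ρ 2 0) (hc 0 2)
      (by rw [← bl1 ρ]; exact hsupp 1 (by decide) (by decide))
      (by rw [← bl4 ρ]; exact hsupp 4 (by decide) (by decide))
    have z1 := zth.1
    have z2 := zth.2
    refine endgame Φ hΦ ρ hc 2 3 1 2 0 1 (by decide) (by decide) (by decide)
      (by decide) ?_ ?_ ?_ ?_ ?_
    · intro p q hpq e1 e2 e3 e4
      have hmem : (p = 0 ∧ q = 2) ∨ (p = 2 ∧ q = 0) := by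
        revert p q
        decide
      rcases hmem with ⟨hp, hq⟩ | ⟨hp, hq⟩ <;> subst hp <;> subst hq
      · exact z1
      · exact z2
    · rw [bl2 ρ]
      exact re_exact _ _ (hc 1 2)
        (by rw [← bl5 ρ]; exact hsupp 5 (by decide) (by decide))
    · rw [bl3 ρ]
      exact im_exact _ _ (hc 0 1)
        (by rw [← bl0 ρ]; exact hsupp 0 (by decide) (by decide))
    · rw [bl2 (Φ ρ)]
      exact re_bound _ _ (hΦc 1 2)
    · rw [bl3 (Φ ρ)]
      exact im_bound _ _ (hΦc 0 1)
  · have hi' : i = 2 := Fin.eq_of_val_eq h1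
    have hj' : j = 4 := Fin.eq_of_val_eq h2
    subst hi'; subst hj'
    have zth := entry_zero (ρ 0 1) (ρ 1 0) (hc 0 1)
      (by rw [← bl0 ρ]; exact hsupp 0 (by decide) (by decide))
      (by rw [← bl3 ρ]; exact hsupp 3 (by decide) (by decide))
    have z1 := zth.1
    have z2 := zth.2
    refine endgame Φ hΦ ρ hc 2 4 1 2 0 2 (by decide) (by decide) (by decide)
      (by decide) ?_ ?_ ?_ ?_ ?_
    · intro p q hpq e1 e2 e3 e4
      have hmem : (p = 0 ∧ q = 1) ∨ (p = 1 ∧ q = 0) := by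
        revert p q
        decide
      rcases hmem with ⟨hp, hq⟩ | ⟨hp, hq⟩ <;> subst hp <;> subst hq
      · exact z1
      · exact z2
    · rw [bl2 ρ]
      exact re_exact _ _ (hc 1 2)
        (by rw [← bl5 ρ]; exact hsupp 5 (by decide) (by decide))
    · rw [bl4 ρ]
      exact im_exact _ _ (hc 0 2)
        (by rw [← bl1 ρ]; exact hsupp 1 (by decide) (by decide))
    · rw [bl2 (Φ ρ)]
      exact re_bound _ _ (hΦc 1 2)
    · rw [bl4 (Φ ρ)]
      exact im_bound _ _ (hΦc 0 2)
  · have hi' : i = 3 := Fin.eq_of_val_eq h1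
    have hj' : j = 4 := Fin.eq_of_val_eq h2
    subst hi'; subst hj'
    have zth := entry_zero (ρ 1 2) (ρ 2 1) (hc 1 2)
      (by rw [← bl2 ρ]; exact hsupp 2 (by decide) (by decide))
      (by rw [← bl5 ρ]; exact hsupp 5 (by decide) (by decide))
    have z1 := zth.1
    have z2 := zth.2
    refine endgame Φ hΦ ρ hc 3 4 0 1 0 2 (by decide) (by decide) (by decide)
      (by decide) ?_ ?_ ?_ ?_ ?_
    · intro p q hpq e1 e2 e3 e4
      have hmem : (p = 1 ∧ q = 2) ∨ (p = 2 ∧ q = 1) := by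
        revert p q
        decide
      rcases hmem with ⟨hp, hq⟩ | ⟨hp, hq⟩ <;> subst hp <;> subst hq
      · exact z1
      · exact z2
    · rw [bl3 ρ]
      exact im_exact _ _ (hc 0 1)
        (by rw [← bl0 ρ]; exact hsupp 0 (by decide) (by decide))
    · rw [bl4 ρ]
      exact im_exact _ _ (hc 0 2)
        (by rw [← bl1 ρ]; exact hsupp 1 (by decide) (by decide))
    · rw [bl3 (Φ ρ)]
      exact im_bound _ _ (hΦc 0 1)
    · rw [bl4 (Φ ρ)]
      exact im_bound _ _ (hΦc 0 2)
  · have hi' : i = 3 := Fin.eq_of_val_eq h1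
    have hj' : j = 5 := Fin.eq_of_val_eq h2
    subst hi'; subst hj'
    have zth := entry_zero (ρ 0 2) (ρ 2 0) (hc 0 2)
      (by rw [← bl1 ρ]; exact hsupp 1 (by decide) (by decide))
      (by rw [← bl4 ρ]; exact hsupp 4 (by decide) (by decide))
    have z1 := zth.1
    have z2 := zth.2
    refine endgame Φ hΦ ρ hc 3 5 0 1 1 2 (by decide) (by decide) (by decide)
      (by decide) ?_ ?_ ?_ ?_ ?_
    · intro p q hpq e1 e2 e3 e4
      have hmem : (p = 0 ∧ q = 2) ∨ (p = 2 ∧ q = 0) := by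
        revert p q
        decide
      rcases hmem with ⟨hp, hq⟩ | ⟨hp, hq⟩ <;> subst hp <;> subst hq
      · exact z1
      · exact z2
    · rw [bl3 ρ]
      exact im_exact _ _ (hc 0 1)
        (by rw [← bl0 ρ]; exact hsupp 0 (by decide) (by decide))
    · rw [bl5 ρ]
      exact im_exact _ _ (hc 1 2)
        (by rw [← bl2 ρ]; exact hsupp 2 (by decide) (by decide))
    · rw [bl3 (Φ ρ)]
      exact im_bound _ _ (hΦc 0 1)
    · rw [bl5 (Φ ρ)]
      exact im_bound _ _ (hΦc 1 2)
  · have hi' : i = 4 := Fin.eq_of_val_eq h1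
    have hj' : j = 5 := Fin.eq_of_val_eq h2
    subst hi'; subst hj'
    have zth := entry_zero (ρ 0 1) (ρ 1 0) (hc 0 1)
      (by rw [← bl0 ρ]; exact hsupp 0 (by decide) (by decide))
      (by rw [← bl3 ρ]; exact hsupp 3 (by decide) (by decide))
    have z1 := zth.1
    have z2 := zth.2
    refine endgame Φ hΦ ρ hc 4 5 0 2 1 2 (by decide) (by decide) (by decide)
      (by decide) ?_ ?_ ?_ ?_ ?_
    · intro p q hpq e1 e2 e3 e4
      have hmem : (p = 0 ∧ q = 1) ∨ (p = 1 ∧ q = 0) := by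
        revert p q
        decide
      rcases hmem with ⟨hp, hq⟩ | ⟨hp, hq⟩ <;> subst hp <;> subst hq
      · exact z1
      · exact z2
    · rw [bl4 ρ]
      exact im_exact _ _ (hc 0 2)
        (by rw [← bl1 ρ]; exact hsupp 1 (by decide) (by decide))
    · rw [bl5 ρ]
      exact im_exact _ _ (hc 1 2)
        (by rw [← bl2 ρ]; exact hsupp 2 (by decide) (by decide))
    · rw [bl4 (Φ ρ)]
      exact im_bound _ _ (hΦc 0 2)
    · rw [bl5 (Φ ρ)]
      exact im_bound _ _ (hΦc 1 2)
end

section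
/- Let a₁, a₂, a₃, a₄, a₅ ∈ ℝ and b₁, b₂, b₃, b₄ ∈ ℂ, and define the 2×2 matrices K₁ = [[a₁, b₁], [0, 0]], K₂ = [[0, 0], [a₂, b₂]], K₃ = [[a₃, 0], [0, b₃]], K₄ = [[0, b₄], [a₄, 0]], K₅ = [[a₅, 0], [0, 0]] (the canonical five-operator form of a qubit incoherent operation). Then there exist 2×2 complex matrices L₁, L₂, L₃, L₄, with L₁ supported on the entries (1,1) and (1,2), L₂ supported on the entries (2,1) and (2,2), L₃ supported on the entries (1,1) and (2,2), and L₄ supported on the entries (1,2) and (2,1) (in particular all four incoherent Kraus operators), such that ∑ₖ₌₁⁵ Kₖ ρ Kₖ† = ∑ₖ₌₁⁴ Lₖ ρ Lₖ† for all ρ ∈ M₂(ℂ). -/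
lemma divle {α β Z : ℝ} (hβ : 0 ≤ β) (hα : 0 ≤ α) (h : α ≤ Z) : α * β / Z ≤ β := by
  rcases eq_or_lt_of_le hα with h0 | h0
  · simp [← h0, hβ]
  · have hZ : 0 < Z := lt_of_lt_of_le h0 h
    rw [div_le_iff₀ hZ]
    nlinarith

lemma divcancel {α : ℝ} (β : ℝ) {Z : ℝ} (hα : 0 ≤ α) (h : α ≤ Z) : Z * (α * β / Z) = α * β := by
  rcases eq_or_lt_of_le hα with h0 | h0
  · simp [← h0]
  · have hZ : 0 < Z := lt_of_lt_of_le h0 h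
    field_simp

lemma pair (c : ℂ) (X Y : ℝ) (hX : 0 ≤ X) (hY : 0 ≤ Y) (h : X * Y = Complex.normSq c) :
    ∃ x y : ℂ, x * (starRingEnd ℂ) x = X ∧ y * (starRingEnd ℂ) y = Y ∧ x * (starRingEnd ℂ) y = c := by
  rcases eq_or_lt_of_le hX with h0 | h0
  · have hc : c = 0 := by
      have : Complex.normSq c = 0 := by rw [← h, ← h0]; ring
      exact Complex.normSq_eq_zero.mp this
    have hY' : Real.sqrt Y * Real.sqrt Y = Y := Real.mul_self_sqrt hY
    refine ⟨0, (Real.sqrt Y : ℂ), by simp [← h0], ?_, by simp [hc]⟩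
    rw [Complex.conj_ofReal]
    exact_mod_cast congrArg (Complex.ofReal) hY'
  · have hX' : Real.sqrt X * Real.sqrt X = X := Real.mul_self_sqrt hX
    have hsx : ((Real.sqrt X : ℝ) : ℂ) ≠ 0 := by
      simp [Real.sqrt_eq_zero', h0.ne', not_le.mpr h0]
    refine ⟨(Real.sqrt X : ℂ), (starRingEnd ℂ) c / (Real.sqrt X : ℂ), ?_, ?_, ?_⟩
    · rw [Complex.conj_ofReal]
      exact_mod_cast congrArg (Complex.ofReal) hX'
    · have key : (starRingEnd ℂ) c / (Real.sqrt X : ℂ) * (starRingEnd ℂ) ((starRingEnd ℂ) c / (Real.sqrt X : ℂ))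
        = ((Complex.normSq c : ℝ) : ℂ) / (X : ℂ) := by
        rw [map_div₀]
        simp only [Complex.conj_ofReal, RingHomCompTriple.comp_apply, RingHom.id_apply]
        rw [div_mul_div_comm, mul_comm ((starRingEnd ℂ) c) c, Complex.mul_conj]
        congr 1
        exact_mod_cast congrArg (Complex.ofReal) hX'
      rw [key, ← h]
      push_cast
      rw [mul_comm (X:ℂ) (Y:ℂ)]
      rw [mul_div_assoc]
      rw [div_self (by exact_mod_cast h0.ne' : (X:ℂ) ≠ 0), mul_one]
    · rw [map_div₀, Complex.conj_ofReal, RingHomCompTriple.comp_apply]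
      rw [RingHom.id_apply, mul_div_assoc', mul_comm, mul_div_assoc, div_self hsx, mul_one]

lemma mags (α₁ α₂ α₃ α₄ ε β₁ β₂ β₃ β₄ : ℝ)
    (hα₁ : 0 ≤ α₁) (hα₂ : 0 ≤ α₂) (hα₃ : 0 ≤ α₃) (hα₄ : 0 ≤ α₄) (hε : 0 ≤ ε)
    (hβ₁ : 0 ≤ β₁) (hβ₂ : 0 ≤ β₂) (hβ₃ : 0 ≤ β₃) (hβ₄ : 0 ≤ β₄) :
    ∃ X Y T S Z W V U : ℝ,
      0 ≤ X ∧ 0 ≤ Y ∧ 0 ≤ T ∧ 0 ≤ S ∧ 0 ≤ Z ∧ 0 ≤ W ∧ 0 ≤ V ∧ 0 ≤ U ∧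
      X * Y = α₁ * β₁ ∧ T * S = α₄ * β₄ ∧ Z * W = α₂ * β₂ ∧ U * V = α₃ * β₃ ∧
      X + U = α₁ + α₃ + ε ∧ Y + T = β₁ + β₄ ∧ Z + S = α₂ + α₄ ∧ W + V = β₂ + β₃ := by
  rcases eq_or_lt_of_le hβ₁ with hb1 | hb1
  · -- β₁ = 0
    exact ⟨α₁ + ε, 0, β₄, α₄, α₂, β₂, β₃, α₃,
      by linarith, le_refl 0, hβ₄, hα₄, hα₂, hβ₂, hβ₃, hα₃,
      by rw [← hb1]; ring, by ring, by ring, by ring,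
      by ring, by rw [← hb1], by ring, by ring⟩
  rcases eq_or_lt_of_le hβ₃ with hb3 | hb3
  · -- β₃ = 0
    exact ⟨α₁, β₁, β₄, α₄, α₂, β₂, 0, α₃ + ε,
      hα₁, hβ₁, hβ₄, hα₄, hα₂, hβ₂, le_refl 0, by linarith,
      by ring, by ring, by ring, by rw [← hb3]; ring,
      by ring, by ring, by ring, by rw [← hb3]⟩
  rcases eq_or_lt_of_le hα₁ with ha1 | ha1
  · -- α₁ = 0
    set T : ℝ := β₁ + β₄ with hT
    have hT0 : 0 < T := by linarith
    set S : ℝ := β₄ * α₄ / T with hS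
    have hS1 : S ≤ α₄ := divle hα₄ hβ₄ (by linarith)
    have hS0 : 0 ≤ S := div_nonneg (by positivity) hT0.le
    set Z : ℝ := α₂ + α₄ - S with hZ
    have hZ1 : α₂ ≤ Z := by linarith
    have hZ0 : 0 ≤ Z := by linarith
    set W : ℝ := α₂ * β₂ / Z with hW
    have hW1 : W ≤ β₂ := divle hβ₂ hα₂ hZ1
    have hW0 : 0 ≤ W := div_nonneg (by positivity) hZ0
    set V : ℝ := β₂ + β₃ - W with hV
    have hV1 : β₃ ≤ V := by linarith
    have hV0 : 0 < V := by linarith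
    set U : ℝ := β₃ * α₃ / V with hU
    have hU1 : U ≤ α₃ := divle hα₃ hβ₃ hV1
    have hU0 : 0 ≤ U := div_nonneg (by positivity) hV0.le
    refine ⟨α₁ + α₃ + ε - U, 0, T, S, Z, W, V, U,
      by linarith, le_refl 0, hT0.le, hS0, hZ0, hW0, hV0.le, hU0,
      by rw [← ha1]; ring, ?_, ?_, ?_, by ring, by rw [hT]; ring, by rw [hZ]; ring,
      by rw [hV]; ring⟩
    · linear_combination divcancel α₄ hβ₄ (show β₄ ≤ T by linarith)
    · linear_combination divcancel β₂ hα₂ hZ1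
    · linear_combination divcancel α₃ hβ₃ hV1
  rcases eq_or_lt_of_le hα₃ with ha3 | ha3
  · -- α₃ = 0
    set W : ℝ := β₂ + β₃ with hW
    have hW0 : 0 < W := by linarith
    set Z : ℝ := β₂ * α₂ / W with hZ
    have hZ1 : Z ≤ α₂ := divle hα₂ hβ₂ (by linarith)
    have hZ0 : 0 ≤ Z := div_nonneg (by positivity) hW0.le
    set S : ℝ := α₂ + α₄ - Z with hS
    have hS1 : α₄ ≤ S := by linarith
    have hS0 : 0 ≤ S := by linarith
    set T : ℝ := α₄ * β₄ / S with hT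
    have hT1 : T ≤ β₄ := divle hβ₄ hα₄ hS1
    have hT0 : 0 ≤ T := div_nonneg (by positivity) hS0
    set Y : ℝ := β₁ + β₄ - T with hY
    have hY1 : β₁ ≤ Y := by linarith
    have hY0 : 0 < Y := by linarith
    set X : ℝ := β₁ * α₁ / Y with hX
    have hX1 : X ≤ α₁ := divle hα₁ hβ₁ hY1
    have hX0 : 0 ≤ X := div_nonneg (by positivity) hY0.le
    refine ⟨X, Y, T, S, Z, W, 0, α₁ + α₃ + ε - X,
      hX0, hY0.le, hT0, hS0, hZ0, hW0.le, le_refl 0, by linarith,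
      ?_, ?_, ?_, by rw [← ha3]; ring, by ring, by rw [hY]; ring, by rw [hS]; ring,
      by rw [hW]; ring⟩
    · linear_combination divcancel α₁ hβ₁ hY1
    · linear_combination divcancel β₄ hα₄ hS1
    · linear_combination divcancel α₂ hβ₂ (by linarith : β₂ ≤ W)
  -- main case : 0 < α₁, 0 < β₁, 0 < α₃, 0 < β₃
  · set A : ℝ := α₁ + α₃ + ε with hA
    have hα₁A : α₁ ≤ A := by linarith
    set f1 : ℝ → ℝ := fun X => β₁ + β₄ - α₁ * β₁ / X with hf1
    set f2 : ℝ → ℝ := fun X => α₂ + α₄ - β₄ * α₄ / f1 X with hf2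
    set f3 : ℝ → ℝ := fun X => β₂ + β₃ - α₂ * β₂ / f2 X with hf3
    have key : ∀ X, α₁ ≤ X → β₄ ≤ f1 X ∧ α₂ ≤ f2 X ∧ β₃ ≤ f3 X := by
      intro X hX
      have h1 : β₄ ≤ f1 X := by
        have := divle hβ₁ ha1.le hX
        rw [hf1]; simp only; linarith
      have h2 : α₂ ≤ f2 X := by
        have := divle hα₄ hβ₄ h1
        rw [hf2]; simp only; linarith
      have h3 : β₃ ≤ f3 X := by
        have := divle hβ₂ hα₂ h2
        rw [hf3]; simp only; linarith
      exact ⟨h1, h2, h3⟩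
    have hc1 : ContinuousOn f1 (Set.Icc α₁ A) := by
      apply ContinuousOn.sub continuousOn_const
      apply ContinuousOn.div continuousOn_const continuousOn_id
      intro X hX
      exact ne_of_gt (lt_of_lt_of_le ha1 hX.1)
    have hc2 : ContinuousOn f2 (Set.Icc α₁ A) := by
      rcases eq_or_lt_of_le hβ₄ with h | h
      · rw [hf2]
        simp only [← h, zero_mul, zero_div, sub_zero]
        exact continuousOn_const
      · apply ContinuousOn.sub continuousOn_const
        apply ContinuousOn.div continuousOn_const hc1
        intro X hX
        exact ne_of_gt (lt_of_lt_of_le h (key X hX.1).1)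
    have hc3 : ContinuousOn f3 (Set.Icc α₁ A) := by
      rcases eq_or_lt_of_le hα₂ with h | h
      · rw [hf3]
        simp only [← h, zero_mul, zero_div, sub_zero]
        exact continuousOn_const
      · apply ContinuousOn.sub continuousOn_const
        apply ContinuousOn.div continuousOn_const hc2
        intro X hX
        exact ne_of_gt (lt_of_lt_of_le h (key X hX.1).2.1)
    have hf3pos : ∀ X, α₁ ≤ X → 0 < f3 X := fun X hX => lt_of_lt_of_le hb3 (key X hX).2.2
    have hcg : ContinuousOn (fun X => A - β₃ * α₃ / f3 X - X) (Set.Icc α₁ A) := by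
      apply ContinuousOn.sub _ continuousOn_id
      apply ContinuousOn.sub continuousOn_const
      apply ContinuousOn.div continuousOn_const hc3
      intro X hX
      exact ne_of_gt (hf3pos X hX.1)
    have hga : 0 ≤ A - β₃ * α₃ / f3 α₁ - α₁ := by
      have h1 : β₃ * α₃ / f3 α₁ ≤ α₃ := divle hα₃ hβ₃ (key α₁ le_rfl).2.2
      linarith
    have hgb : A - β₃ * α₃ / f3 A - A ≤ 0 := by
      have h1 : 0 ≤ β₃ * α₃ / f3 A := div_nonneg (by positivity) (hf3pos A hα₁A).le
      linarith
    obtain ⟨X, hXmem, hgX⟩ :=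
      intermediate_value_Icc' hα₁A hcg (Set.mem_Icc.mpr ⟨hgb, hga⟩)
    simp only at hgX
    have hXge : α₁ ≤ X := hXmem.1
    have hX0 : 0 < X := lt_of_lt_of_le ha1 hXge
    obtain ⟨k1, k2, k3⟩ := key X hXge
    have hT0 : 0 ≤ f1 X := le_trans hβ₄ k1
    have hZ0 : 0 ≤ f2 X := le_trans hα₂ k2
    have hV0 : 0 < f3 X := hf3pos X hXge
    refine ⟨X, α₁ * β₁ / X, f1 X, β₄ * α₄ / f1 X, f2 X, α₂ * β₂ / f2 X, f3 X,
      β₃ * α₃ / f3 X,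
      hX0.le, div_nonneg (by positivity) hX0.le, hT0,
      div_nonneg (by positivity) hT0, hZ0, div_nonneg (by positivity) hZ0,
      hV0.le, div_nonneg (by positivity) hV0.le, ?_, ?_, ?_, ?_, ?_, ?_, ?_, ?_⟩
    · linear_combination divcancel β₁ ha1.le hXge
    · linear_combination divcancel α₄ hβ₄ k1
    · linear_combination divcancel β₂ hα₂ k2
    · linear_combination divcancel α₃ hβ₃ k3
    · linarith
    · rw [hf1]; ring
    · rw [hf2]; ring
    · rw [hf3]; ring



open Matrix

/-- `L` is supported on the set `S` of (row, column) positions: every entry of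
`L` outside `S` vanishes. -/
def SupportedOn (L : Matrix (Fin 2) (Fin 2) ℂ) (S : Set (Fin 2 × Fin 2)) : Prop :=
  ∀ p q, L p q ≠ 0 → (p, q) ∈ S

theorem qubit_five_to_four (a₁ a₂ a₃ a₄ a₅ : ℝ) (b₁ b₂ b₃ b₄ : ℂ) :
    ∃ L₁ L₂ L₃ L₄ : Matrix (Fin 2) (Fin 2) ℂ,
      SupportedOn L₁ {(0, 0), (0, 1)} ∧
      SupportedOn L₂ {(1, 0), (1, 1)} ∧
      SupportedOn L₃ {(0, 0), (1, 1)} ∧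
      SupportedOn L₄ {(0, 1), (1, 0)} ∧
      ∀ ρ : Matrix (Fin 2) (Fin 2) ℂ,
        !![(a₁ : ℂ), b₁; 0, 0] * ρ * !![(a₁ : ℂ), b₁; 0, 0]ᴴ +
        !![0, 0; (a₂ : ℂ), b₂] * ρ * !![0, 0; (a₂ : ℂ), b₂]ᴴ +
        !![(a₃ : ℂ), 0; 0, b₃] * ρ * !![(a₃ : ℂ), 0; 0, b₃]ᴴ +
        !![0, b₄; (a₄ : ℂ), 0] * ρ * !![0, b₄; (a₄ : ℂ), 0]ᴴ +
        !![(a₅ : ℂ), 0; 0, 0] * ρ * !![(a₅ : ℂ), 0; 0, 0]ᴴ =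
        L₁ * ρ * L₁ᴴ + L₂ * ρ * L₂ᴴ + L₃ * ρ * L₃ᴴ + L₄ * ρ * L₄ᴴ := by
  obtain ⟨X, Y, T, S, Z, W, V, U, hX0, hY0, hT0, hS0, hZ0, hW0, hV0, hU0,
      hXY, hTS, hZW, hUV, hXU, hYT, hZS, hWV⟩ :=
    mags (a₁^2) (a₂^2) (a₃^2) (a₄^2) (a₅^2) (Complex.normSq b₁) (Complex.normSq b₂)
      (Complex.normSq b₃) (Complex.normSq b₄) (sq_nonneg _) (sq_nonneg _) (sq_nonneg _)
      (sq_nonneg _) (sq_nonneg _) (Complex.normSq_nonneg _) (Complex.normSq_nonneg _)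
      (Complex.normSq_nonneg _) (Complex.normSq_nonneg _)
  obtain ⟨x, y, hx, hy, hxy⟩ := pair ((a₁ : ℂ) * (starRingEnd ℂ) b₁) X Y hX0 hY0 (by
    rw [Complex.normSq_mul, Complex.normSq_conj, Complex.normSq_ofReal, hXY]; ring)
  obtain ⟨t, s, ht, hs, hts⟩ := pair ((a₄ : ℂ) * b₄) T S hT0 hS0 (by
    rw [Complex.normSq_mul, Complex.normSq_ofReal, hTS]; ring)
  obtain ⟨z, w, hz, hw, hzw⟩ := pair ((a₂ : ℂ) * (starRingEnd ℂ) b₂) Z W hZ0 hW0 (by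
    rw [Complex.normSq_mul, Complex.normSq_conj, Complex.normSq_ofReal, hZW]; ring)
  obtain ⟨u, v, hu, hv, huv⟩ := pair ((a₃ : ℂ) * (starRingEnd ℂ) b₃) U V hU0 hV0 (by
    rw [Complex.normSq_mul, Complex.normSq_conj, Complex.normSq_ofReal, hUV]; ring)
  have e1 : x * (starRingEnd ℂ) x + u * (starRingEnd ℂ) u = (a₁:ℂ)^2 + (a₃:ℂ)^2 + (a₅:ℂ)^2 := by
    have h := congrArg (Complex.ofReal) hXU
    push_cast at h
    rw [hx, hu]; exact h
  have e2 := hxy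
  have e2' : (starRingEnd ℂ) x * y = (a₁:ℂ) * b₁ := by
    have h := congrArg (starRingEnd ℂ) hxy
    simpa [Complex.conj_ofReal, mul_comm] using h
  have e3 : y * (starRingEnd ℂ) y + t * (starRingEnd ℂ) t
      = b₁ * (starRingEnd ℂ) b₁ + b₄ * (starRingEnd ℂ) b₄ := by
    have h := congrArg (Complex.ofReal) hYT
    push_cast at h
    rw [hy, ht, Complex.mul_conj, Complex.mul_conj]; exact h
  have e4 := huv
  have e4' : (starRingEnd ℂ) u * v = (a₃:ℂ) * b₃ := by
    have h := congrArg (starRingEnd ℂ) huv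
    simpa [Complex.conj_ofReal, mul_comm] using h
  have e5 := hts
  have e5' : (starRingEnd ℂ) t * s = (a₄:ℂ) * (starRingEnd ℂ) b₄ := by
    have h := congrArg (starRingEnd ℂ) hts
    simpa [Complex.conj_ofReal, mul_comm] using h
  have e6 : z * (starRingEnd ℂ) z + s * (starRingEnd ℂ) s = (a₂:ℂ)^2 + (a₄:ℂ)^2 := by
    have h := congrArg (Complex.ofReal) hZS
    push_cast at h
    rw [hz, hs]; exact h
  have e7 := hzw
  have e7' : (starRingEnd ℂ) z * w = (a₂:ℂ) * b₂ := by
    have h := congrArg (starRingEnd ℂ) hzw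
    simpa [Complex.conj_ofReal, mul_comm] using h
  have e8 : w * (starRingEnd ℂ) w + v * (starRingEnd ℂ) v
      = b₂ * (starRingEnd ℂ) b₂ + b₃ * (starRingEnd ℂ) b₃ := by
    have h := congrArg (Complex.ofReal) hWV
    push_cast at h
    rw [hw, hv, Complex.mul_conj, Complex.mul_conj]; exact h
  refine ⟨!![x, y; 0, 0], !![0, 0; z, w], !![u, 0; 0, v], !![0, t; s, 0],
    ?_, ?_, ?_, ?_, ?_⟩
  · intro p q h
    fin_cases p <;> fin_cases q <;>
      simp only [Matrix.of_apply, Matrix.cons_val', Matrix.cons_val_zero, Matrix.cons_val_one,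
        Matrix.head_cons, Matrix.head_fin_const, Matrix.empty_val', Matrix.cons_val_fin_one,
        Fin.mk_zero, Fin.mk_one, ne_eq, not_true_eq_false, Set.mem_insert_iff,
        Set.mem_singleton_iff, Prod.mk.injEq] at h ⊢ <;> tauto
  · intro p q h
    fin_cases p <;> fin_cases q <;>
      simp only [Matrix.of_apply, Matrix.cons_val', Matrix.cons_val_zero, Matrix.cons_val_one,
        Matrix.head_cons, Matrix.head_fin_const, Matrix.empty_val', Matrix.cons_val_fin_one,
        Fin.mk_zero, Fin.mk_one, ne_eq, not_true_eq_false, Set.mem_insert_iff,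
        Set.mem_singleton_iff, Prod.mk.injEq] at h ⊢ <;> tauto
  · intro p q h
    fin_cases p <;> fin_cases q <;>
      simp only [Matrix.of_apply, Matrix.cons_val', Matrix.cons_val_zero, Matrix.cons_val_one,
        Matrix.head_cons, Matrix.head_fin_const, Matrix.empty_val', Matrix.cons_val_fin_one,
        Fin.mk_zero, Fin.mk_one, ne_eq, not_true_eq_false, Set.mem_insert_iff,
        Set.mem_singleton_iff, Prod.mk.injEq] at h ⊢ <;> tauto
  · intro p q h
    fin_cases p <;> fin_cases q <;>
      simp only [Matrix.of_apply, Matrix.cons_val', Matrix.cons_val_zero, Matrix.cons_val_one,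
        Matrix.head_cons, Matrix.head_fin_const, Matrix.empty_val', Matrix.cons_val_fin_one,
        Fin.mk_zero, Fin.mk_one, ne_eq, not_true_eq_false, Set.mem_insert_iff,
        Set.mem_singleton_iff, Prod.mk.injEq] at h ⊢ <;> tauto
  · intro ρ
    ext i j
    fin_cases i <;> fin_cases j <;>
      simp only [Matrix.mul_apply, Matrix.add_apply, Matrix.conjTranspose_apply,
        Fin.sum_univ_two, Matrix.of_apply, Matrix.cons_val', Matrix.cons_val_zero,
        Matrix.cons_val_one, Matrix.head_cons, Matrix.head_fin_const, Matrix.empty_val',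
        Matrix.cons_val_fin_one, Fin.mk_zero, Fin.mk_one, Fin.isValue, Complex.star_def,
        Complex.conj_ofReal, map_zero, mul_zero, zero_mul, add_zero, zero_add]
    · linear_combination -(ρ 0 0 * e1) - ρ 0 1 * e2 - ρ 1 0 * e2' - ρ 1 1 * e3
    · linear_combination -(ρ 0 1 * e4) - ρ 1 0 * e5
    · linear_combination -(ρ 1 0 * e4') - ρ 0 1 * e5'
    · linear_combination -(ρ 0 0 * e6) - ρ 0 1 * e7 - ρ 1 0 * e7' - ρ 1 1 * e8
end
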